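/- Let C ∉ S₀ be a metabolite for which some explanation with respect to S₀ and R exists. A rule Θ ∈ R is essential in S₀ for C if and only if every χ-path from S₀ in Gr((R,S₀)) leading to C contains a transition labeled by Θ. -/

import Mathlib

/-- A biochemical rule: either binary `A₁ ∘ A₂ → C` or unary `A → C`. -/
inductive Rule (M : Type) where
  | binary (a₁ a₂ c : M) : Rule M
  | unary (a c : M) : Rule M
  deriving DecidableEq

namespace Rule

/-- The conclusion (produced metabolite) of a rule. -/
def concl {M : Type} : Rule M → M
  | .binary _ _ c => c
  | .unary _ c => c

/-- The premises of a rule, as a finite set. -/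
def premises {M : Type} [DecidableEq M] : Rule M → Finset M
  | .binary a₁ a₂ _ => {a₁, a₂}
  | .unary a _ => {a}

/-- The premises of a rule, as a set. -/
def premSet {M : Type} : Rule M → Set M
  | .binary a₁ a₂ _ => {a₁, a₂}
  | .unary a _ => {a}

end Rule

/-- Explanation trees: leaves `C[]`, unary nodes `C_r[E]`, binary nodes `C_r[E₁,E₂]`. -/
inductive Expl (M : Type) where
  | leaf (c : M) : Expl M
  | node1 (r : Rule M) (e : Expl M) : Expl M
  | node2 (r : Rule M) (e₁ e₂ : Expl M) : Expl M

namespace Expl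

/-- The root metabolite of an explanation. -/
def root {M : Type} : Expl M → M
  | .leaf c => c
  | .node1 r _ => r.concl
  | .node2 r _ _ => r.concl

/-- `ℛ(E)`: the set of rules used by an explanation. -/
def rules {M : Type} : Expl M → Set (Rule M)
  | .leaf _ => ∅
  | .node1 r e => {r} ∪ e.rules
  | .node2 r e₁ e₂ => {r} ∪ e₁.rules ∪ e₂.rules

/-- `ℳ(E)`: the set of metabolites required by an explanation. -/
def mets {M : Type} : Expl M → Set M
  | .leaf c => {c}
  | .node1 r e => r.premSet ∪ e.mets
  | .node2 r e₁ e₂ => r.premSet ∪ e₁.mets ∪ e₂.mets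

/-- Subexplanation (subtree) relation. -/
inductive Sub {M : Type} : Expl M → Expl M → Prop where
  | refl (e : Expl M) : Sub e e
  | node1 {e e' : Expl M} {r : Rule M} : Sub e e' → Sub e (.node1 r e')
  | left {e e₁ e₂ : Expl M} {r : Rule M} : Sub e e₁ → Sub e (.node2 r e₁ e₂)
  | right {e e₁ e₂ : Expl M} {r : Rule M} : Sub e e₂ → Sub e (.node2 r e₁ e₂)

/-- An explanation is uniform if any two subexplanations with the same root metabolite coincide. -/
def Uniform {M : Type} (E : Expl M) : Prop :=
  ∀ e₁ e₂ : Expl M, Sub e₁ E → Sub e₂ E → root e₁ = root e₂ → e₁ = e₂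

end Expl

/-- `IsExpl S R C E`: `E` is an explanation for `C` w.r.t. initial solution `S` and m-network `R`. -/
inductive IsExpl {M : Type} (S : Finset M) (R : Finset (Rule M)) : M → Expl M → Prop where
  | leaf {c : M} : c ∈ S → IsExpl S R c (.leaf c)
  | node1 {a c : M} {e : Expl M} : Rule.unary a c ∈ R → IsExpl S R a e →
      IsExpl S R c (.node1 (Rule.unary a c) e)
  | node2 {a₁ a₂ c : M} {e₁ e₂ : Expl M} : Rule.binary a₁ a₂ c ∈ R →
      IsExpl S R a₁ e₁ → IsExpl S R a₂ e₂ →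
      IsExpl S R c (.node2 (Rule.binary a₁ a₂ c) e₁ e₂)

/-- A rule `r ∈ R` is essential in `S` for `C`. -/
def Essential {M : Type} [DecidableEq M] (S : Finset M) (R : Finset (Rule M))
    (r : Rule M) (C : M) : Prop :=
  (∃ E : Expl M, IsExpl S R C E) ∧ ¬ ∃ E : Expl M, IsExpl S (R.erase r) C E

/-- Rules `r₁, r₂ ∈ R` are mutually essential in `S` for `C`. -/
def MutuallyEssential {M : Type} [DecidableEq M] (S : Finset M) (R : Finset (Rule M))
    (r₁ r₂ : Rule M) (C : M) : Prop :=
  (∃ E : Expl M, IsExpl S (R.erase r₁) C E) ∧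
  (∃ E : Expl M, IsExpl S (R.erase r₂) C E) ∧
  ¬ ∃ E : Expl M, IsExpl S ((R.erase r₁).erase r₂) C E

section Paths

variable {M : Type} [DecidableEq M]

/-- A path in `Gr((R,S₀))`, represented by its list of transition rules from a starting state. -/
inductive IsPath (R : Finset (Rule M)) : Finset M → List (Rule M) → Prop where
  | nil (S : Finset M) : IsPath R S []
  | cons {S : Finset M} {r : Rule M} {rs : List (Rule M)} :
      r ∈ R → r.premises ⊆ S → IsPath R (insert r.concl S) rs → IsPath R S (r :: rs)

/-- A χ-path: a path with no self-loop transitions (each step produces a genuinely new state). -/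
inductive IsChiPath (R : Finset (Rule M)) : Finset M → List (Rule M) → Prop where
  | nil (S : Finset M) : IsChiPath R S []
  | cons {S : Finset M} {r : Rule M} {rs : List (Rule M)} :
      r ∈ R → r.premises ⊆ S → r.concl ∉ S →
      IsChiPath R (insert r.concl S) rs → IsChiPath R S (r :: rs)

/-- `LeadsTo C S rs`: the path `rs` from `S` leads to `C`, i.e. its last produced metabolite
is `C` and its final state is the first state containing `C`. -/
def LeadsTo (C : M) : Finset M → List (Rule M) → Prop
  | _, [] => False
  | S, [r] => C ∉ S ∧ r.concl = C
  | S, r :: rs => C ∉ S ∧ LeadsTo C (insert r.concl S) rs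

/-- The final state of a path. -/
def run (S : Finset M) : List (Rule M) → Finset M
  | [] => S
  | r :: rs => run (insert r.concl S) rs

/-- Auxiliary predicate for ρ-paths: `Xs` accumulates the previously produced metabolites,
`Us` the union of the previous `Ŝᵢ = premises Θᵢ ∩ S₀`, `S` is the current state. -/
def IsRhoAux (R : Finset (Rule M)) (S₀ : Finset M) :
    Finset M → Finset M → Finset M → List (Rule M) → Prop
  | _, _, _, [] => True
  | Xs, Us, S, r :: rs =>
      r ∈ R ∧ r.premises ⊆ S ∧
      (r.concl ∈ S → r.concl ∈ S₀ ∧ r.concl ∉ Xs ∧ r.concl ∉ Us) ∧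
      IsRhoAux R S₀ (insert r.concl Xs) (Us ∪ (r.premises ∩ S₀)) (insert r.concl S) rs

/-- A ρ-path from `S₀` in `Gr((R,S₀))`. -/
def IsRhoPath (R : Finset (Rule M)) (S₀ : Finset M) (rs : List (Rule M)) : Prop :=
  IsRhoAux R S₀ ∅ ∅ S₀ rs

/-- `Ŝ₁ ∪ ⋯ ∪ Ŝ_m`: the union of the parts of `S₀` used by the transitions of the path. -/
def hatUnion (S₀ : Finset M) (rs : List (Rule M)) : Finset M :=
  rs.foldr (fun r acc => (r.premises ∩ S₀) ∪ acc) ∅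

/-- `𝒰(p) = (Ŝ₁ ∪ ⋯ ∪ Ŝ_m) \ {X₁,…,X_m}`. -/
def usedMet (S₀ : Finset M) (rs : List (Rule M)) : Finset M :=
  hatUnion S₀ rs \ (rs.map Rule.concl).toFinset

end Paths

section AuxLemmas

variable {M : Type} [DecidableEq M]

lemma run_append (S : Finset M) (rs rs' : List (Rule M)) :
    run S (rs ++ rs') = run (run S rs) rs' := by
  induction rs generalizing S with
  | nil => rfl
  | cons r rs ih => simp only [List.cons_append, run]; exact ih _

lemma subset_run (S : Finset M) (rs : List (Rule M)) : S ⊆ run S rs := by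
  induction rs generalizing S with
  | nil => exact Finset.Subset.refl _
  | cons r rs ih => exact (Finset.subset_insert _ _).trans (ih _)

lemma chi_append {R : Finset (Rule M)} {rs' : List (Rule M)} :
    ∀ {S : Finset M} {rs : List (Rule M)}, IsChiPath R S rs →
      IsChiPath R (run S rs) rs' → IsChiPath R S (rs ++ rs') := by
  intro S rs h
  induction h with
  | nil => intro h'; exact h'
  | cons hr hp hc _ ih => intro h'; exact IsChiPath.cons hr hp hc (ih h')

lemma chi_mono {R R' : Finset (Rule M)} (hRR : R ⊆ R') :
    ∀ {S : Finset M} {rs : List (Rule M)}, IsChiPath R S rs → IsChiPath R' S rs := by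
  intro S rs h
  induction h with
  | nil => exact IsChiPath.nil _
  | cons hr hp hc _ ih => exact IsChiPath.cons (hRR hr) hp hc ih

lemma chi_mem {R : Finset (Rule M)} :
    ∀ {S : Finset M} {rs : List (Rule M)}, IsChiPath R S rs → ∀ r ∈ rs, r ∈ R := by
  intro S rs h
  induction h with
  | nil => intro r hr; simp at hr
  | cons hr _ _ _ ih =>
    intro r' hr'
    rcases List.mem_cons.mp hr' with h | h
    · exact h ▸ hr
    · exact ih r' h

lemma expl_of_chi {R' : Finset (Rule M)} {S₀ : Finset M} :
    ∀ {S : Finset M} {rs : List (Rule M)}, IsChiPath R' S rs →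
      (∀ x ∈ S, ∃ E, IsExpl S₀ R' x E) → ∀ x ∈ run S rs, ∃ E, IsExpl S₀ R' x E := by
  intro S rs h
  induction h with
  | nil => intro hS x hx; exact hS x hx
  | @cons S r rs hr hp _ _ ih =>
    intro hS x hx
    refine ih (fun y hy => ?_) x hx
    rcases Finset.mem_insert.mp hy with hy | hy
    · subst hy
      cases r with
      | binary a₁ a₂ c =>
        obtain ⟨E₁, hE₁⟩ := hS a₁ (hp (by simp [Rule.premises]))
        obtain ⟨E₂, hE₂⟩ := hS a₂ (hp (by simp [Rule.premises]))
        exact ⟨_, IsExpl.node2 hr hE₁ hE₂⟩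
      | unary a c =>
        obtain ⟨E₁, hE₁⟩ := hS a (hp (by simp [Rule.premises]))
        exact ⟨_, IsExpl.node1 hr hE₁⟩
    · exact hS y hy

lemma chi_of_expl {R' : Finset (Rule M)} {S₀ : Finset M} {x : M} {E : Expl M}
    (h : IsExpl S₀ R' x E) : ∀ S : Finset M, S₀ ⊆ S →
      ∃ rs, IsChiPath R' S rs ∧ x ∈ run S rs := by
  induction h with
  | @leaf c hc => exact fun S hS => ⟨[], IsChiPath.nil _, hS hc⟩
  | @node1 a c e hr _ ih =>
    intro S hS
    obtain ⟨rs₁, hchi, hmem⟩ := ih S hS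
    by_cases hc : c ∈ run S rs₁
    · exact ⟨rs₁, hchi, hc⟩
    · refine ⟨rs₁ ++ [Rule.unary a c], chi_append hchi ?_, ?_⟩
      · refine IsChiPath.cons hr ?_ hc (IsChiPath.nil _)
        intro y hy
        simp only [Rule.premises, Finset.mem_singleton] at hy
        exact hy ▸ hmem
      · rw [run_append]
        simp [run, Rule.concl]
  | @node2 a₁ a₂ c e₁ e₂ hr _ _ ih₁ ih₂ =>
    intro S hS
    obtain ⟨rs₁, hchi₁, hmem₁⟩ := ih₁ S hS
    obtain ⟨rs₂, hchi₂, hmem₂⟩ := ih₂ (run S rs₁) (hS.trans (subset_run _ _))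
    have hchi : IsChiPath R' S (rs₁ ++ rs₂) := chi_append hchi₁ hchi₂
    have hmem₁' : a₁ ∈ run S (rs₁ ++ rs₂) := by
      rw [run_append]; exact subset_run _ _ hmem₁
    have hmem₂' : a₂ ∈ run S (rs₁ ++ rs₂) := by rw [run_append]; exact hmem₂
    by_cases hc : c ∈ run S (rs₁ ++ rs₂)
    · exact ⟨rs₁ ++ rs₂, hchi, hc⟩
    · refine ⟨(rs₁ ++ rs₂) ++ [Rule.binary a₁ a₂ c], chi_append hchi ?_, ?_⟩
      · refine IsChiPath.cons hr ?_ hc (IsChiPath.nil _)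
        intro y hy
        simp only [Rule.premises, Finset.mem_insert, Finset.mem_singleton] at hy
        rcases hy with hy | hy
        · exact hy ▸ hmem₁'
        · exact hy ▸ hmem₂'
      · rw [run_append]
        simp [run, Rule.concl]

lemma trim {R' : Finset (Rule M)} {C : M} :
    ∀ {rs : List (Rule M)} {S : Finset M}, IsChiPath R' S rs → C ∈ run S rs → C ∉ S →
      ∃ rs', IsChiPath R' S rs' ∧ LeadsTo C S rs' := by
  intro rs
  induction rs with
  | nil => intro S _ hmem hCS; exact absurd hmem hCS
  | cons r rs ih =>
    intro S h hmem hCS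
    cases h with
    | cons hr hp hc hrest =>
      by_cases hcC : r.concl = C
      · refine ⟨[r], IsChiPath.cons hr hp hc (IsChiPath.nil _), ?_⟩
        exact ⟨hCS, hcC⟩
      · have hCS' : C ∉ insert r.concl S := by
          simp only [Finset.mem_insert]
          push_neg
          exact ⟨fun h => hcC h.symm, hCS⟩
        obtain ⟨rs₂, hchi₂, hlt₂⟩ := ih hrest hmem hCS'
        refine ⟨r :: rs₂, IsChiPath.cons hr hp hc hchi₂, ?_⟩
        cases rs₂ with
        | nil => exact absurd hlt₂ (by simp [LeadsTo])
        | cons r' t => exact ⟨hCS, hlt₂⟩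

lemma chi_avoid {R : Finset (Rule M)} {Θ : Rule M} :
    ∀ {S : Finset M} {rs : List (Rule M)}, IsChiPath R S rs → Θ ∉ rs →
      IsChiPath (R.erase Θ) S rs := by
  intro S rs h
  induction h with
  | nil => intro _; exact IsChiPath.nil _
  | cons hr hp hc _ ih =>
    intro hn
    refine IsChiPath.cons (Finset.mem_erase.mpr ⟨?_, hr⟩) hp hc
      (ih fun h => hn (List.mem_cons_of_mem _ h))
    intro h; exact hn (h ▸ List.mem_cons_self)

lemma leadsTo_mem {C : M} :
    ∀ {rs : List (Rule M)} {S : Finset M}, LeadsTo C S rs → C ∈ run S rs := by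
  intro rs
  induction rs with
  | nil => intro S h; exact absurd h (by simp [LeadsTo])
  | cons r rs ih =>
    intro S h
    cases rs with
    | nil =>
      obtain ⟨_, hc⟩ := h
      simp [run, hc.symm]
    | cons r' t => exact ih h.2

end AuxLemmas

/-- for `C ∉ S₀` with some explanation, a rule `Θ ∈ R` is essential in `S₀`
for `C` iff every χ-path from `S₀` in `Gr((R,S₀))` leading to `C` contains a transition
labelled by `Θ`. -/
theorem stmt8 {M : Type} [DecidableEq M] (R : Finset (Rule M)) (S₀ : Finset M) (C : M)
    (Θ : Rule M) (hC : C ∉ S₀) (hex : ∃ E : Expl M, IsExpl S₀ R C E) (hΘ : Θ ∈ R) :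
    Essential S₀ R Θ C ↔
      ∀ rs : List (Rule M), IsChiPath R S₀ rs → LeadsTo C S₀ rs → Θ ∈ rs := by
  constructor
  · rintro ⟨_, hno⟩ rs hchi hlt
    by_contra hΘrs
    apply hno
    exact expl_of_chi (chi_avoid hchi hΘrs) (fun x hx => ⟨_, IsExpl.leaf hx⟩) C (leadsTo_mem hlt)
  · intro hall
    refine ⟨hex, ?_⟩
    rintro ⟨E, hE⟩
    obtain ⟨rs, hchi, hmem⟩ := chi_of_expl hE S₀ (Finset.Subset.refl _)
    obtain ⟨rs', hchi', hlt'⟩ := trim hchi hmem hC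
    have := hall rs' (chi_mono (Finset.erase_subset _ _) hchi') hlt'
    exact (Finset.mem_erase.mp (chi_mem hchi' Θ this)).1 rfl
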